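/- Let d ≥ 1 and let r ≥ 3 be an integer. For each j ∈ {1, …, r}, let (H_{j,n})_{n∈ℕ} be a sequence of measurable functions ℝ^d → ℂ such that ∫_{ℝ^d} |H_{j,n}(k)|² dk = 1 for all n and ∫_{ℝ^d} |H_{j,n}(k)| dk → 0 as n → ∞. Then for every ψ ∈ ℝ^d, the multilinear integral Ĩ_{r,n}(ψ) = ∫_{ℝ^d} ⋯ ∫_{ℝ^d} |H_{1,n}(k₁) ⋯ H_{r−1,n}(k_{r−1}) · H_{r,n}(ψ − Σ_{j=1}^{r−1} k_j)| dk₁ ⋯ dk_{r−1} converges to 0 as n → ∞. -/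

import Mathlib

open MeasureTheory Filter
open scoped ENNReal BigOperators

/-- Product of one-coordinate functions integrates to the product of integrals over a
finite product space (lintegral version). -/
lemma lintegral_fin_prod_aux {E : Type*} [MeasureSpace E] [SigmaFinite (volume : Measure E)] :
    ∀ {n : ℕ} (f : Fin n → E → ℝ≥0∞), (∀ i, Measurable (f i)) →
      ∫⁻ x : Fin n → E, ∏ i, f i (x i) = ∏ i, ∫⁻ x, f i x := by
  intro n
  induction n with
  | zero =>
      intro f _
      simp [volume_pi, lintegral_const]
  | succ n ih =>
      intro f hf
      have MP := (measurePreserving_piFinSuccAbove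
        (fun _ : Fin (n + 1) => (volume : Measure E)) 0).symm
      have hFm : Measurable fun x : Fin (n + 1) → E => ∏ i, f i (x i) :=
        Finset.measurable_prod _ fun i _ => (hf i).comp (measurable_pi_apply i)
      rw [volume_pi, ← MP.lintegral_comp hFm]
      have hmm : Measurable fun y : Fin n → E => ∏ i : Fin n, f i.succ (y i) :=
        Finset.measurable_prod _ fun i _ => (hf i.succ).comp (measurable_pi_apply i)
      simp only [MeasurableEquiv.piFinSuccAbove_symm_apply, Fin.insertNthEquiv,
        Equiv.coe_fn_mk, Fin.insertNth_zero, Fin.prod_univ_succ, Fin.cons_zero, Fin.cons_succ,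
        Fin.zero_succAbove, cast_eq]
      rw [lintegral_prod_mul (hf 0).aemeasurable hmm.aemeasurable]
      rw [show (Measure.pi fun j : Fin n => (volume : Measure E)) = volume from
        (volume_pi).symm, ih _ fun i => hf i.succ]

/-- If each sequence of transfer functions has unit `L²` norm and `L¹` norm tending to `0`,
then the multilinear integral `Ĩ_{r,n}(ψ)` tends to `0` as `n → ∞`, for `r = m+1 ≥ 3`. -/
theorem taper_prod_asymp
    (d m : ℕ) (hd : 1 ≤ d) (hr : 3 ≤ m + 1)
    (H : Fin (m + 1) → ℕ → (Fin d → ℝ) → ℂ)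
    (hmeas : ∀ j n, Measurable (H j n))
    (hL2 : ∀ j n, ∫⁻ k : Fin d → ℝ, (‖H j n k‖₊ : ℝ≥0∞) ^ (2 : ℕ) = 1)
    (hL1 : ∀ j, Tendsto (fun n => ∫⁻ k : Fin d → ℝ, (‖H j n k‖₊ : ℝ≥0∞))
      atTop (nhds 0)) :
    ∀ ψ : Fin d → ℝ,
      Tendsto (fun n => ∫⁻ k : Fin m → (Fin d → ℝ),
        (∏ j : Fin m, (‖H j.castSucc n (k j)‖₊ : ℝ≥0∞)) *
          (‖H (Fin.last m) n (ψ - ∑ j : Fin m, k j)‖₊ : ℝ≥0∞)) atTop (nhds 0) := by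
  intro ψ
  obtain ⟨p, rfl⟩ : ∃ p, m = p + 1 := ⟨m - 1, by omega⟩
  have hp1 : 0 < p := by omega
  -- squared L² norms with real exponents
  have h2 : ∀ (j : Fin (p + 2)) (n : ℕ),
      ∫⁻ x : Fin d → ℝ, (‖H j n x‖₊ : ℝ≥0∞) ^ (2 : ℝ) = 1 := by
    intro j n
    rw [show (2 : ℝ) = ((2 : ℕ) : ℝ) by norm_num]
    simp_rw [ENNReal.rpow_natCast]
    exact hL2 j n
  -- Cauchy–Schwarz bound for the inner integral
  have inner_le : ∀ (n : ℕ) (c : Fin d → ℝ),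
      (∫⁻ x : Fin d → ℝ, (‖H ((Fin.last p).castSucc) n x‖₊ : ℝ≥0∞) *
        (‖H (Fin.last (p + 1)) n (c - x)‖₊ : ℝ≥0∞)) ≤ 1 := by
    intro n c
    have hf : Measurable fun x : Fin d → ℝ =>
        (‖H ((Fin.last p).castSucc) n x‖₊ : ℝ≥0∞) := (hmeas _ n).enorm
    have hg : Measurable fun x : Fin d → ℝ =>
        (‖H (Fin.last (p + 1)) n (c - x)‖₊ : ℝ≥0∞) :=
      ((hmeas _ n).comp (measurable_const.sub measurable_id)).enorm
    have hconj : Real.HolderConjugate 2 2 := Real.HolderConjugate.two_two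
    have CS := ENNReal.lintegral_mul_le_Lp_mul_Lq volume hconj hf.aemeasurable hg.aemeasurable
    have hg2 : ∫⁻ x : Fin d → ℝ,
        (‖H (Fin.last (p + 1)) n (c - x)‖₊ : ℝ≥0∞) ^ (2 : ℝ) = 1 := by
      have mp : MeasurePreserving (fun x : Fin d → ℝ => c - x) volume volume :=
        Measure.measurePreserving_sub_left volume c
      have hm2 : Measurable fun x : Fin d → ℝ =>
          (‖H (Fin.last (p + 1)) n x‖₊ : ℝ≥0∞) ^ (2 : ℝ) :=
        (hmeas _ n).enorm.pow_const _
      exact (mp.lintegral_comp hm2).trans (h2 _ n)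
    calc (∫⁻ x : Fin d → ℝ, (‖H ((Fin.last p).castSucc) n x‖₊ : ℝ≥0∞) *
            (‖H (Fin.last (p + 1)) n (c - x)‖₊ : ℝ≥0∞))
        ≤ (∫⁻ x : Fin d → ℝ, (‖H ((Fin.last p).castSucc) n x‖₊ : ℝ≥0∞) ^ (2 : ℝ)) ^ (1 / (2:ℝ)) *
          (∫⁻ x : Fin d → ℝ, (‖H (Fin.last (p + 1)) n (c - x)‖₊ : ℝ≥0∞) ^ (2 : ℝ)) ^ (1 / (2:ℝ)) := by
          simpa [Pi.mul_apply] using CS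
      _ = 1 := by rw [h2 _ n, hg2]; simp
  -- main bound: the full integral is at most the product of the first `p` L¹ norms
  have key : ∀ n : ℕ, (∫⁻ k : Fin (p + 1) → Fin d → ℝ,
        (∏ j : Fin (p + 1), (‖H j.castSucc n (k j)‖₊ : ℝ≥0∞)) *
          (‖H (Fin.last (p + 1)) n (ψ - ∑ j : Fin (p + 1), k j)‖₊ : ℝ≥0∞))
      ≤ ∏ j : Fin p, ∫⁻ x : Fin d → ℝ, (‖H (j.castSucc.castSucc) n x‖₊ : ℝ≥0∞) := by
    intro n
    have hFmeas : Measurable fun k : Fin (p + 1) → Fin d → ℝ =>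
        (∏ j : Fin (p + 1), (‖H j.castSucc n (k j)‖₊ : ℝ≥0∞)) *
          (‖H (Fin.last (p + 1)) n (ψ - ∑ j : Fin (p + 1), k j)‖₊ : ℝ≥0∞) := by
      refine Measurable.mul ?_ ?_
      · exact Finset.measurable_prod _ fun j _ => (hmeas _ n).enorm.comp (measurable_pi_apply j)
      · exact (hmeas _ n).enorm.comp
          (measurable_const.sub (Finset.measurable_sum _ fun j _ => measurable_pi_apply j))
    have MP := (measurePreserving_piFinSuccAbove
      (fun _ : Fin (p + 1) => (volume : Measure (Fin d → ℝ))) (Fin.last p)).symm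
    rw [volume_pi, ← MP.lintegral_comp hFmeas]
    have hswap := lintegral_prod_symm (μ := (volume : Measure (Fin d → ℝ)))
      (ν := Measure.pi fun _ : Fin p => (volume : Measure (Fin d → ℝ)))
      ((fun k : Fin (p + 1) → Fin d → ℝ =>
        (∏ j : Fin (p + 1), (‖H j.castSucc n (k j)‖₊ : ℝ≥0∞)) *
          (‖H (Fin.last (p + 1)) n (ψ - ∑ j : Fin (p + 1), k j)‖₊ : ℝ≥0∞)) ∘
        ⇑(MeasurableEquiv.piFinSuccAbove (fun _ => Fin d → ℝ) (Fin.last p)).symm)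
      ((hFmeas.comp (MeasurableEquiv.measurable _)).aemeasurable)
    simp only [Function.comp] at hswap
    rw [hswap]
    simp_rw [MeasurableEquiv.piFinSuccAbove_symm_apply, Fin.insertNthEquiv_last,
      Fin.snocEquiv_apply, Fin.prod_univ_castSucc, Fin.sum_univ_castSucc,
      Fin.snoc_castSucc, Fin.snoc_last]
    have step1 : ∀ y : Fin p → Fin d → ℝ,
        (∫⁻ x : Fin d → ℝ, (∏ j : Fin p, (‖H (j.castSucc.castSucc) n (y j)‖₊ : ℝ≥0∞)) *
            (‖H ((Fin.last p).castSucc) n x‖₊ : ℝ≥0∞) *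
            (‖H (Fin.last (p + 1)) n (ψ - (∑ j : Fin p, y j + x))‖₊ : ℝ≥0∞))
        ≤ ∏ j : Fin p, (‖H (j.castSucc.castSucc) n (y j)‖₊ : ℝ≥0∞) := by
      intro y
      have hmul : Measurable fun x : Fin d → ℝ =>
          (‖H ((Fin.last p).castSucc) n x‖₊ : ℝ≥0∞) *
            (‖H (Fin.last (p + 1)) n ((ψ - ∑ j : Fin p, y j) - x)‖₊ : ℝ≥0∞) :=
        (hmeas _ n).enorm.mul
          (((hmeas _ n).comp (measurable_const.sub measurable_id)).enorm)
      calc (∫⁻ x : Fin d → ℝ, (∏ j : Fin p, (‖H (j.castSucc.castSucc) n (y j)‖₊ : ℝ≥0∞)) *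
              (‖H ((Fin.last p).castSucc) n x‖₊ : ℝ≥0∞) *
              (‖H (Fin.last (p + 1)) n (ψ - (∑ j : Fin p, y j + x))‖₊ : ℝ≥0∞))
          = (∏ j : Fin p, (‖H (j.castSucc.castSucc) n (y j)‖₊ : ℝ≥0∞)) *
              ∫⁻ x : Fin d → ℝ, (‖H ((Fin.last p).castSucc) n x‖₊ : ℝ≥0∞) *
                (‖H (Fin.last (p + 1)) n ((ψ - ∑ j : Fin p, y j) - x)‖₊ : ℝ≥0∞) := by
            rw [← lintegral_const_mul _ hmul]
            congr 1
            funext x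
            rw [mul_assoc, sub_add_eq_sub_sub]
        _ ≤ (∏ j : Fin p, (‖H (j.castSucc.castSucc) n (y j)‖₊ : ℝ≥0∞)) * 1 :=
            mul_le_mul_right (inner_le n _) _
        _ = _ := mul_one _
    calc (∫⁻ y : Fin p → Fin d → ℝ, ∫⁻ x : Fin d → ℝ,
            (∏ j : Fin p, (‖H (j.castSucc.castSucc) n (y j)‖₊ : ℝ≥0∞)) *
            (‖H ((Fin.last p).castSucc) n x‖₊ : ℝ≥0∞) *
            (‖H (Fin.last (p + 1)) n (ψ - (∑ j : Fin p, y j + x))‖₊ : ℝ≥0∞)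
            ∂volume ∂(Measure.pi fun _ => volume))
        ≤ ∫⁻ y : Fin p → Fin d → ℝ, ∏ j : Fin p, (‖H (j.castSucc.castSucc) n (y j)‖₊ : ℝ≥0∞)
            ∂(Measure.pi fun _ => volume) := lintegral_mono step1
      _ = ∏ j : Fin p, ∫⁻ x : Fin d → ℝ, (‖H (j.castSucc.castSucc) n x‖₊ : ℝ≥0∞) := by
          rw [show (Measure.pi fun _ : Fin p => (volume : Measure (Fin d → ℝ))) = volume from
            (volume_pi).symm]
          exact lintegral_fin_prod_aux _ fun j => (hmeas _ n).enorm
  -- conclude via squeeze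
  set i0 : Fin p := ⟨0, hp1⟩
  have hev : ∀ᶠ n in atTop, (∏ j : Fin p,
      ∫⁻ x : Fin d → ℝ, (‖H (j.castSucc.castSucc) n x‖₊ : ℝ≥0∞))
      ≤ ∫⁻ x : Fin d → ℝ, (‖H (i0.castSucc.castSucc) n x‖₊ : ℝ≥0∞) := by
    have hall : ∀ᶠ n in atTop, ∀ j : Fin p,
        (∫⁻ x : Fin d → ℝ, (‖H (j.castSucc.castSucc) n x‖₊ : ℝ≥0∞)) ≤ 1 := by
      rw [eventually_all]
      intro j
      exact (hL1 (j.castSucc.castSucc)).eventually_le_const (by norm_num)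
    filter_upwards [hall] with n hn
    calc (∏ j : Fin p, ∫⁻ x : Fin d → ℝ, (‖H (j.castSucc.castSucc) n x‖₊ : ℝ≥0∞))
        = (∫⁻ x : Fin d → ℝ, (‖H (i0.castSucc.castSucc) n x‖₊ : ℝ≥0∞)) *
          ∏ j ∈ Finset.univ.erase i0,
            ∫⁻ x : Fin d → ℝ, (‖H (j.castSucc.castSucc) n x‖₊ : ℝ≥0∞) :=
          (Finset.mul_prod_erase _ _ (Finset.mem_univ i0)).symm
      _ ≤ (∫⁻ x : Fin d → ℝ, (‖H (i0.castSucc.castSucc) n x‖₊ : ℝ≥0∞)) * 1 :=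
          mul_le_mul_right (Finset.prod_le_one (fun _ _ => zero_le) fun j _ => hn j) _
      _ = _ := mul_one _
  refine tendsto_of_tendsto_of_tendsto_of_le_of_le' tendsto_const_nhds
    (hL1 (i0.castSucc.castSucc)) (Eventually.of_forall fun n => zero_le) ?_
  filter_upwards [hev] with n hn
  exact le_trans (key n) hn
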